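/- If a permutation π contains no copy of the Fishburn pattern f and avoids 123, then π avoids both 2413 and 3412. -/

import Mathlib

/-- Two lists of naturals have the same length and the same relative order
(including ties). -/
def SameRelOrder (u v : List ℕ) : Prop :=
  u.length = v.length ∧
    ∀ i j, i < u.length → j < u.length →
      (u.getD i 0 < u.getD j 0 ↔ v.getD i 0 < v.getD j 0)

/-- `α` contains `β` as a pattern: some subsequence of `α` has the same length
and relative order as `β`. -/
def SeqContains (α β : List ℕ) : Prop :=
  ∃ γ : List ℕ, γ.Sublist α ∧ SameRelOrder γ β

/-- A copy of the Fishburn pattern `f` in `l`: indices `j`, `k` with `j + 1 < k`,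
`l j = l k + 1` and `l (j+1) > l j`. -/
def HasFishburnCopy (l : List ℕ) : Prop :=
  ∃ j k, j + 1 < k ∧ k < l.length ∧
    l.getD j 0 = l.getD k 0 + 1 ∧ l.getD j 0 < l.getD (j + 1) 0

/-- A Fishburn permutation contains no copy of the Fishburn pattern `f`. -/
def FishburnFree (l : List ℕ) : Prop := ¬ HasFishburnCopy l

/-- `l` is a permutation of `1, …, n`, written in one-line notation. -/
def IsPermList (n : ℕ) (l : List ℕ) : Prop := l.Perm (List.range' 1 n)

/-- The set of Fishburn permutations of length `n` avoiding each pattern in `pats`. -/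
def FishburnSet (n : ℕ) (pats : List (List ℕ)) : Set (List ℕ) :=
  {l | IsPermList n l ∧ FishburnFree l ∧ ∀ p ∈ pats, ¬ SeqContains l p}

/-- The set of all permutations of length `n` avoiding each pattern in `pats`. -/
def PermSet (n : ℕ) (pats : List (List ℕ)) : Set (List ℕ) :=
  {l | IsPermList n l ∧ ∀ p ∈ pats, ¬ SeqContains l p}

/-- The number of ascents of a sequence. -/
def ascCount (l : List ℕ) : ℕ :=
  ((Finset.range l.length).filter
    (fun i => i + 1 < l.length ∧ l.getD i 0 < l.getD (i + 1) 0)).card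

/-- `l` is an ascent sequence. -/
def IsAscentSeq (l : List ℕ) : Prop :=
  (0 < l.length → l.getD 0 0 = 0) ∧
    ∀ j, 0 < j → j < l.length → l.getD j 0 ≤ 1 + ascCount (l.take j)

/-- The set of ascent sequences of length `n` avoiding each pattern in `pats`. -/
def AscentSeqSet (n : ℕ) (pats : List (List ℕ)) : Set (List ℕ) :=
  {l | l.length = n ∧ IsAscentSeq l ∧ ∀ p ∈ pats, ¬ SeqContains l p}

private lemma pair_sublist (l : List ℕ) (i j : ℕ) (hij : i < j) (hj : j < l.length) :
    List.Sublist [l.getD i 0, l.getD j 0] l := by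
  have hi : i < l.length := lt_trans hij hj
  have hj' : j - (i+1) < (l.drop (i+1)).length := by
    rw [List.length_drop]; omega
  have hjval : l[j] = (l.drop (i+1))[j - (i+1)]'hj' := by
    rw [List.getElem_drop]; congr 1; omega
  rw [List.getD_eq_getElem l 0 hi, List.getD_eq_getElem l 0 hj]
  have h1 : List.Sublist [l[i], l[j]] (l[i] :: l.drop (i+1)) := by
    apply List.Sublist.cons₂
    rw [hjval, List.singleton_sublist]
    exact List.getElem_mem _
  have h2 : List.Sublist (l[i] :: l.drop (i+1)) l := by
    conv_rhs => rw [← List.take_append_drop i l, List.drop_eq_getElem_cons hi]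
    exact List.sublist_append_of_sublist_right (List.Sublist.refl _)
  exact h1.trans h2

private lemma triple_sublist (l : List ℕ) (i j k : ℕ) (hij : i < j) (hjk : j < k)
    (hk : k < l.length) : List.Sublist [l.getD i 0, l.getD j 0, l.getD k 0] l := by
  have hi : i < l.length := by omega
  have hjl : j < l.length := by omega
  have hlen : ∀ m, m < l.length → m - (i+1) < (l.drop (i+1)).length := by
    intro m hm; rw [List.length_drop]; omega
  have e1 : (l.drop (i+1)).getD (j-(i+1)) 0 = l.getD j 0 := by
    rw [List.getD_eq_getElem _ 0 (hlen j hjl), List.getD_eq_getElem l 0 hjl,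
      List.getElem_drop]
    congr 1; omega
  have e2 : (l.drop (i+1)).getD (k-(i+1)) 0 = l.getD k 0 := by
    rw [List.getD_eq_getElem _ 0 (hlen k hk), List.getD_eq_getElem l 0 hk,
      List.getElem_drop]
    congr 1; omega
  have h2 : List.Sublist [l.getD j 0, l.getD k 0] (l.drop (i+1)) := by
    rw [← e1, ← e2]
    exact pair_sublist _ _ _ (by omega) (by rw [List.length_drop]; omega)
  have h1 : List.Sublist [l.getD i 0, l.getD j 0, l.getD k 0] (l.getD i 0 :: l.drop (i+1)) :=
    List.Sublist.cons₂ _ h2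
  have h3 : List.Sublist (l.getD i 0 :: l.drop (i+1)) l := by
    rw [List.getD_eq_getElem l 0 hi]
    conv_rhs => rw [← List.take_append_drop i l, List.drop_eq_getElem_cons hi]
    exact List.sublist_append_of_sublist_right (List.Sublist.refl _)
  exact h1.trans h3

private lemma contains123 (l : List ℕ) (i j k : ℕ) (hij : i < j) (hjk : j < k)
    (hk : k < l.length) (h1 : l.getD i 0 < l.getD j 0) (h2 : l.getD j 0 < l.getD k 0) :
    SeqContains l [1, 2, 3] := by
  refine ⟨[l.getD i 0, l.getD j 0, l.getD k 0], triple_sublist l i j k hij hjk hk, by simp, ?_⟩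
  intro a b ha hb
  simp only [List.length_cons, List.length_nil] at ha hb
  interval_cases a <;> interval_cases b <;>
    simp only [List.getD_cons_zero, List.getD_cons_succ] <;> omega

private lemma exists_adj_ascent (l : List ℕ) : ∀ b a, a < b → l.getD a 0 < l.getD b 0 →
    ∃ t, a ≤ t ∧ t + 1 ≤ b ∧ l.getD t 0 < l.getD (t + 1) 0 := by
  intro b
  induction b using Nat.strong_induction_on with
  | _ b ih =>
    intro a hab hlt
    by_cases hb : a + 1 = b
    · exact ⟨a, le_refl _, by omega, by rwa [hb]⟩
    · rcases lt_or_ge (l.getD (b-1) 0) (l.getD b 0) with h | h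
      · refine ⟨b - 1, by omega, by omega, ?_⟩
        have hb1 : b - 1 + 1 = b := by omega
        rw [hb1]; exact h
      · obtain ⟨t, h1, h2, h3⟩ := ih (b-1) (by omega) a (by omega) (by omega)
        exact ⟨t, h1, by omega, h3⟩

private lemma ascent_eq_one {n : ℕ} {π : List ℕ} (hπ : IsPermList n π) (hf : FishburnFree π)
    (h123 : ¬ SeqContains π [1, 2, 3]) {j : ℕ} (hj : j + 1 < π.length)
    (hasc : π.getD j 0 < π.getD (j + 1) 0) : π.getD j 0 = 1 := by
  have hjl : j < π.length := by omega
  have hmem : π.getD j 0 ∈ π := by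
    rw [List.getD_eq_getElem _ 0 hjl]; exact List.getElem_mem _
  obtain ⟨h1, h2⟩ := List.mem_range'_1.mp (hπ.mem_iff.mp hmem)
  by_contra hne
  have h2' : 2 ≤ π.getD j 0 := by omega
  have hm : π.getD j 0 - 1 ∈ π :=
    hπ.mem_iff.mpr (List.mem_range'_1.mpr ⟨by omega, by omega⟩)
  obtain ⟨k, hk, hkval⟩ := List.mem_iff_getElem.mp hm
  have hkd : π.getD k 0 = π.getD j 0 - 1 := by
    rw [List.getD_eq_getElem _ 0 hk]; exact hkval
  rcases lt_trichotomy k j with h | h | h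
  · exact h123 (contains123 π k j (j+1) h (by omega) hj (by omega) hasc)
  · subst h; omega
  · have hne1 : k ≠ j + 1 := by
      intro he; rw [he] at hkd; omega
    exact hf ⟨j, k, by omega, hk, by omega, hasc⟩

private lemma avoid4 {n : ℕ} {π : List ℕ} (hπ : IsPermList n π) (hf : FishburnFree π)
    (h123 : ¬ SeqContains π [1, 2, 3]) (p : List ℕ) (hp4 : p.length = 4)
    (h01 : p.getD 0 0 < p.getD 1 0) (h23 : p.getD 2 0 < p.getD 3 0) :
    ¬ SeqContains π p := by
  rintro ⟨γ, hsub, hlen, hord⟩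
  have hγ4 : γ.length = 4 := by rw [hlen, hp4]
  have hg01 : γ.getD 0 0 < γ.getD 1 0 := (hord 0 1 (by omega) (by omega)).mpr h01
  have hg23 : γ.getD 2 0 < γ.getD 3 0 := (hord 2 3 (by omega) (by omega)).mpr h23
  obtain ⟨f, hfget⟩ := List.sublist_iff_exists_fin_orderEmbedding_get_eq.mp hsub
  have hval : ∀ (m : ℕ) (hm : m < γ.length),
      π.getD (f ⟨m, hm⟩).val 0 = γ.getD m 0 := by
    intro m hm
    rw [List.getD_eq_getElem _ 0 (f ⟨m, hm⟩).isLt, List.getD_eq_getElem _ 0 hm]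
    simpa using (hfget ⟨m, hm⟩).symm
  have hmono : ∀ (a b : ℕ) (ha : a < γ.length) (hb : b < γ.length), a < b →
      (f ⟨a, ha⟩).val < (f ⟨b, hb⟩).val := by
    intro a b ha hb hab
    exact f.lt_iff_lt.mpr (by exact Fin.mk_lt_mk.mpr hab)
  have h0 : (0 : ℕ) < γ.length := by omega
  have h1 : (1 : ℕ) < γ.length := by omega
  have h2 : (2 : ℕ) < γ.length := by omega
  have h3 : (3 : ℕ) < γ.length := by omega
  set i0 := (f ⟨0, h0⟩).val
  set i1 := (f ⟨1, h1⟩).val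
  set i2 := (f ⟨2, h2⟩).val
  set i3 := (f ⟨3, h3⟩).val
  have ha1 : π.getD i0 0 < π.getD i1 0 := by
    rw [hval 0 h0, hval 1 h1]; exact hg01
  have ha2 : π.getD i2 0 < π.getD i3 0 := by
    rw [hval 2 h2, hval 3 h3]; exact hg23
  obtain ⟨t1, ht1a, ht1b, ht1asc⟩ := exists_adj_ascent π i1 i0 (hmono 0 1 h0 h1 (by omega)) ha1
  obtain ⟨t2, ht2a, ht2b, ht2asc⟩ := exists_adj_ascent π i3 i2 (hmono 2 3 h2 h3 (by omega)) ha2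
  have h12 : i1 < i2 := hmono 1 2 h1 h2 (by omega)
  have hlen1 : t1 + 1 < π.length := lt_of_le_of_lt ht1b (f ⟨1, h1⟩).isLt
  have hlen2 : t2 + 1 < π.length := lt_of_le_of_lt ht2b (f ⟨3, h3⟩).isLt
  have e1 : π.getD t1 0 = 1 := ascent_eq_one hπ hf h123 hlen1 ht1asc
  have e2 : π.getD t2 0 = 1 := ascent_eq_one hπ hf h123 hlen2 ht2asc
  have hnd : π.Nodup := hπ.nodup_iff.mpr (List.nodup_range')
  have ht1l : t1 < π.length := by omega
  have ht2l : t2 < π.length := by omega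
  have : t1 = t2 := by
    rw [List.getD_eq_getElem _ 0 ht1l] at e1
    rw [List.getD_eq_getElem _ 0 ht2l] at e2
    exact (hnd.getElem_inj_iff).mp (e1.trans e2.symm)
  omega

/-- If a permutation `π` contains no copy of the Fishburn pattern `f` and avoids 123,
then `π` avoids both 2413 and 3412. -/
theorem stmt10 {n : ℕ} (π : List ℕ) (hπ : IsPermList n π) (hf : FishburnFree π)
    (h123 : ¬ SeqContains π [1, 2, 3]) :
    ¬ SeqContains π [2, 4, 1, 3] ∧ ¬ SeqContains π [3, 4, 1, 2] := by
  exact ⟨avoid4 hπ hf h123 _ (by simp) (by simp) (by simp),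
    avoid4 hπ hf h123 _ (by simp) (by simp) (by simp)⟩
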